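/- Consider a two-species Lotka–Volterra jump chain with rates ϑ = β + δ > 0, interspecific competition rate α > 0, and no intraspecific competition, started with minority count m. There exist constants f, g > 0 such that the number I(S) of individual (non-competitive) events before consensus satisfies Pr[I(S) ≥ f·log m] ≥ 1 − 1/m^g. -/

import Mathlib

open MeasureTheory ProbabilityTheory
open scoped ENNReal

open Classical in
/-- Number of individual (non-competitive) events, i.e. transitions satisfying the
predicate `NonComp`, occurring before consensus is reached. -/
noncomputable def indivCount {Ω : Type*} (NonComp : ℕ × ℕ → ℕ × ℕ → Prop)
    (S : ℕ → Ω → ℕ × ℕ) (ω : Ω) : ℝ≥0∞ :=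
  ∑' t : ℕ,
    if (∀ s ≤ t, 0 < min (S s ω).1 (S s ω).2) ∧ NonComp (S t ω) (S (t + 1) ω)
    then 1 else 0



set_option linter.unusedSectionVars false
set_option maxHeartbeats 1600000

namespace LV12
variable {Ω : Type} [MeasurableSpace Ω]

def mins (S : ℕ → Ω → ℕ × ℕ) (t : ℕ) (ω : Ω) : ℕ := min (S t ω).1 (S t ω).2
def FirstHit (S : ℕ → Ω → ℕ × ℕ) (k t : ℕ) (ω : Ω) : Prop :=
  mins S t ω = k ∧ ∀ s < t, k < mins S s ω
def succev (S : ℕ → Ω → ℕ × ℕ) (NC : ℕ × ℕ → ℕ × ℕ → Prop) (k : ℕ) (ω : Ω) : Prop :=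
  ∃ t, FirstHit S k t ω ∧ NC (S t ω) (S (t + 1) ω)
open Classical in
noncomputable def Yf (S : ℕ → Ω → ℕ × ℕ) (NC : ℕ × ℕ → ℕ × ℕ → Prop) (k : ℕ) (ω : Ω) : ℝ≥0∞ :=
  if succev S NC k ω then 2⁻¹ else 1

variable {S : ℕ → Ω → ℕ × ℕ} {NC : ℕ × ℕ → ℕ × ℕ → Prop}

lemma fh_unique {k t t' : ℕ} {ω : Ω} (h : FirstHit S k t ω) (h' : FirstHit S k t' ω) : t = t' := by
  by_contra hne
  rcases Nat.lt_or_ge t t' with hlt | hge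
  · exact absurd h.1 (by have := h'.2 t hlt; omega)
  · have hlt : t' < t := by omega
    exact absurd h'.1 (by have := h.2 t' hlt; omega)

lemma fh_exists {m : ℕ} (hm0 : ∀ ω, mins S 0 ω = m)
    (hdec : ∀ t ω, mins S t ω ≤ mins S (t + 1) ω + 1)
    {ω : Ω} (hcons : ∃ t, mins S t ω = 0) {k : ℕ} (hk : k ≤ m) :
    ∃ t, FirstHit S k t ω := by
  have hex : ∃ t, mins S t ω ≤ k := by
    obtain ⟨t, ht⟩ := hcons; exact ⟨t, by omega⟩
  refine ⟨Nat.find hex, ?_, fun s hs => ?_⟩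
  · have h1 : mins S (Nat.find hex) ω ≤ k := Nat.find_spec hex
    rcases Nat.eq_zero_or_pos (Nat.find hex) with h0 | hpos
    · rw [h0] at h1 ⊢; rw [hm0 ω] at h1 ⊢; omega
    · obtain ⟨t', ht'⟩ : ∃ t', Nat.find hex = t' + 1 := ⟨Nat.find hex - 1, by omega⟩
      have h2 : ¬ mins S t' ω ≤ k := Nat.find_min hex (by omega)
      have h3 := hdec t' ω
      rw [← ht'] at h3; omega
  · have := Nat.find_min hex hs; omega

/-- the key conditioning step -/
lemma step (ϑ α : ℝ) (hϑ : 0 < ϑ) (hα : 0 < α)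
    (μ : Measure Ω) [IsProbabilityMeasure μ]
    (hS : ∀ t, Measurable (S t)) {m : ℕ}
    (hm0 : ∀ ω, mins S 0 ω = m)
    (hdec : ∀ t ω, mins S t ω ≤ mins S (t + 1) ω + 1)
    (hcons : μ {ω | ∃ t, mins S t ω = 0} = 1)
    (hcond : ∀ (t : ℕ) (path : ℕ → ℕ × ℕ),
          0 < min (path t).1 (path t).2 →
          μ {ω | ∀ s ≤ t, S s ω = path s} ≠ 0 →
          μ[|{ω | ∀ s ≤ t, S s ω = path s}] {ω | NC (path t) (S (t + 1) ω)}
            = ENNReal.ofReal (ϑ * ((path t).1 + (path t).2) /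
                  (α * (path t).1 * (path t).2 + ϑ * ((path t).1 + (path t).2))))
    {κ : ℕ} (hκ1 : 1 ≤ κ) (hκm : κ ≤ m)
    (G : Ω → ℝ≥0∞) (hG1 : ∀ ω, G ω ≤ 1)
    (hGconst : ∀ (t : ℕ) (ω ω' : Ω), FirstHit S κ t ω → (∀ s ≤ t, S s ω' = S s ω) →
      G ω' = G ω) :
    ∫⁻ ω, Yf S NC κ ω * G ω ∂μ ≤
      ENNReal.ofReal (1 - ϑ / (α + ϑ) / (2 * κ)) * ∫⁻ ω, G ω ∂μ := by
  classical
  set c : ℝ := ϑ / (α + ϑ) with hc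
  set q : ℝ≥0∞ := ENNReal.ofReal (1 - c / (2 * κ)) with hq
  -- index type for cylinders at the hitting time of level κ
  let ι := (t : ℕ) × (Fin (t + 1) → ℕ × ℕ)
  let pext : ι → ℕ → ℕ × ℕ := fun i s => if h : s < i.1 + 1 then i.2 ⟨s, h⟩ else (0, 0)
  have pext_eq : ∀ (i : ι) (s : ℕ) (hs : s ≤ i.1), pext i s = i.2 ⟨s, by omega⟩ := by
    intro i s hs; simp only [pext]; rw [dif_pos (by omega)]
  let Good : ι → Prop := fun i =>
    min (pext i i.1).1 (pext i i.1).2 = κ ∧ ∀ s < i.1, κ < min (pext i s).1 (pext i s).2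
  let Cyl : ι → Set Ω := fun i => if Good i then {ω | ∀ s ≤ i.1, S s ω = pext i s} else ∅
  have hCylMeas : ∀ i, MeasurableSet (Cyl i) := by
    intro i
    simp only [Cyl]
    split
    · have : {ω : Ω | ∀ s ≤ i.1, S s ω = pext i s}
          = ⋂ s, ⋂ (_ : s ≤ i.1), (S s) ⁻¹' {pext i s} := by
        ext ω; simp [Set.mem_iInter]
      rw [this]
      exact MeasurableSet.iInter fun s => MeasurableSet.iInter fun _ =>
        (hS s) (measurableSet_singleton _)
    · exact MeasurableSet.empty
  -- membership gives first hit
  have hfhmem : ∀ (i : ι) (_ : Good i) (ω : Ω), (∀ s ≤ i.1, S s ω = pext i s) →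
      FirstHit S κ i.1 ω := by
    rintro i hg ω hmem
    refine ⟨?_, fun s hs => ?_⟩
    · unfold mins; rw [hmem i.1 le_rfl]; exact hg.1
    · unfold mins; rw [hmem s (by omega)]; exact hg.2 s hs
  -- disjointness
  have hdisj : Pairwise (Function.onFun Disjoint Cyl) := by
    intro i j hne
    by_cases hgi : Good i
    · by_cases hgj : Good j
      · simp only [Function.onFun, Cyl, if_pos hgi, if_pos hgj]
        rw [Set.disjoint_left]
        intro ω hωi hωj
        apply hne
        have ht : i.1 = j.1 :=
          fh_unique (hfhmem i hgi ω hωi) (hfhmem j hgj ω hωj)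
        obtain ⟨ti, qi⟩ := i
        obtain ⟨tj, qj⟩ := j
        have ht' : ti = tj := ht
        subst ht'
        apply congrArg (Sigma.mk ti)
        funext s
        have hs : s.1 ≤ ti := Nat.lt_succ_iff.mp s.isLt
        have h1 := hωi s.1 hs
        have h2 := hωj s.1 hs
        rw [pext_eq _ _ hs] at h1 h2
        exact h1.symm.trans h2
      · simp [Function.onFun, Cyl, if_neg hgj]
    · simp [Function.onFun, Cyl, if_neg hgi]
  -- covering
  set U : Set Ω := ⋃ i, Cyl i with hU
  have hUmeas : MeasurableSet U := MeasurableSet.iUnion hCylMeas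
  have hcover : {ω | ∃ t, mins S t ω = 0} ⊆ U := by
    intro ω hω
    obtain ⟨t, hfh⟩ := fh_exists hm0 hdec hω hκm
    refine Set.mem_iUnion.2 ⟨⟨t, fun s => S s.1 ω⟩, ?_⟩
    have hgood : Good ⟨t, fun s => S s.1 ω⟩ := by
      constructor
      · rw [pext_eq _ _ le_rfl]; exact hfh.1
      · intro s hs; rw [pext_eq _ _ (by omega)]; exact hfh.2 s hs
    simp only [Cyl, if_pos hgood]
    intro s hs
    rw [pext_eq _ _ hs]
  have hUc : μ Uᶜ = 0 := by
    have h1 : μ U = 1 := le_antisymm prob_le_one (hcons ▸ measure_mono hcover)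
    rw [prob_compl_eq_one_sub hUmeas, h1, tsub_self]
  -- per-cylinder estimate
  have hper : ∀ i : ι, ∫⁻ ω in Cyl i, Yf S NC κ ω * G ω ∂μ ≤ q * ∫⁻ ω in Cyl i, G ω ∂μ := by
    intro i
    by_cases hgi : Good i
    swap
    · simp [Cyl, if_neg hgi]
    by_cases hμ0 : μ (Cyl i) = 0
    · rw [setLIntegral_measure_zero _ _ hμ0, setLIntegral_measure_zero _ _ hμ0, mul_zero]
    -- nontrivial cylinder
    set t := i.1 with htdef
    set Cset : Set Ω := {ω | ∀ s ≤ t, S s ω = pext i s} with hCset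
    have hCeq : Cyl i = Cset := by simp only [Cyl, if_pos hgi]; rfl
    rw [hCeq] at hμ0 ⊢
    have hCmeas : MeasurableSet Cset := by rw [← hCeq]; exact hCylMeas i
    set A : Set Ω := {ω | NC (pext i t) (S (t + 1) ω)} with hA
    have hAmeas : MeasurableSet A :=
      (hS (t + 1)) ((Set.to_countable {y : ℕ × ℕ | NC (pext i t) y}).measurableSet)
    -- state components
    have h0 : 0 < min (pext i i.1).1 (pext i i.1).2 := by
      have := hgi.1
      omega
    have h1 := hcond t (pext i) h0 hμ0
    rw [cond_apply hCmeas] at h1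
    rw [← hA] at h1
    set na := (pext i t).1 with hna
    set nb := (pext i t).2 with hnb
    have hmin : min na nb = κ := hgi.1
    have hna1 : 1 ≤ na := by omega
    have hnb1 : 1 ≤ nb := by omega
    -- the real success probability
    set p : ℝ := ϑ * ((na : ℝ) + nb) / (α * na * nb + ϑ * (na + nb)) with hp
    have hnaR : (1:ℝ) ≤ (na:ℝ) := by exact_mod_cast hna1
    have hnbR : (1:ℝ) ≤ (nb:ℝ) := by exact_mod_cast hnb1
    have habpos : (0:ℝ) < α * na * nb := by positivity
    have hsumpos : (0:ℝ) < ϑ * ((na:ℝ) + nb) := by positivity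
    have hden : 0 < α * (na : ℝ) * nb + ϑ * (na + nb) := by linarith
    have hp0 : 0 ≤ p := div_nonneg hsumpos.le hden.le
    have hp1 : p ≤ 1 := by
      rw [hp, div_le_one hden]; linarith
    have hpc : c / κ ≤ p := by
      have hab : na * nb ≤ κ * (na + nb) := by
        rcases Nat.le_total na nb with h | h
        · have hκna : κ = na := by omega
          rw [hκna]
          exact Nat.mul_le_mul (le_refl na) (Nat.le_add_left nb na)
        · have hκnb : κ = nb := by omega
          rw [hκnb, Nat.mul_comm]
          exact Nat.mul_le_mul (le_refl nb) (Nat.le_add_right na nb)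
      have habR : (na : ℝ) * nb ≤ (κ : ℝ) * (na + nb) := by exact_mod_cast hab
      have hκR : (1:ℝ) ≤ (κ:ℝ) := by exact_mod_cast hκ1
      rw [hc, div_div, hp, div_le_div_iff₀ (by positivity) hden]
      have key1 : ϑ * α * ((na:ℝ) * nb) ≤ ϑ * α * ((κ:ℝ) * (na + nb)) :=
        mul_le_mul_of_nonneg_left habR (by positivity)
      have key2 : ϑ * ϑ * ((na:ℝ) + nb) ≤ ϑ * ϑ * ((κ:ℝ) * (na + nb)) := by
        apply mul_le_mul_of_nonneg_left _ (by positivity)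
        nlinarith
      nlinarith [key1, key2]
    -- conditional probability
    have hmain : μ (Cset ∩ A) = ENNReal.ofReal p * μ Cset := by
      have h2 : μ Cset ≠ ⊤ := measure_ne_top μ _
      calc μ (Cset ∩ A) = (μ Cset * (μ Cset)⁻¹) * μ (Cset ∩ A) := by
            rw [ENNReal.mul_inv_cancel hμ0 h2, one_mul]
        _ = μ Cset * ((μ Cset)⁻¹ * μ (Cset ∩ A)) := by ring
        _ = μ Cset * ENNReal.ofReal p := by rw [h1]
        _ = ENNReal.ofReal p * μ Cset := mul_comm _ _
    -- G is constant on the cylinder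
    obtain ⟨ω₀, hω₀⟩ : Cset.Nonempty := nonempty_of_measure_ne_zero hμ0
    set z := G ω₀ with hz
    have hzle : z ≤ 1 := hG1 ω₀
    have hzne : z ≠ ⊤ := by exact ne_top_of_le_ne_top ENNReal.one_ne_top hzle
    have hGz : ∀ ω ∈ Cset, G ω = z := by
      intro ω hω
      exact hGconst t ω₀ ω (hfhmem i hgi ω₀ hω₀) (fun s hs => by rw [hω s hs, hω₀ s hs])
    -- Y on the cylinder
    have hYz : ∀ ω ∈ Cset, Yf S NC κ ω = (if ω ∈ A then 2⁻¹ else 1) := by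
      intro ω hω
      have hiff : succev S NC κ ω ↔ ω ∈ A := by
        constructor
        · rintro ⟨s, hfh', hnc⟩
          have hst : s = t := fh_unique hfh' (hfhmem i hgi ω hω)
          rw [hst] at hnc
          rw [hω t le_rfl] at hnc
          exact hnc
        · intro hmem
          exact ⟨t, hfhmem i hgi ω hω, by rw [hω t le_rfl]; exact hmem⟩
      unfold Yf
      exact if_congr hiff rfl rfl
    -- compute the integrals
    have hIG : ∫⁻ ω in Cset, G ω ∂μ = z * μ Cset := by
      rw [setLIntegral_congr_fun hCmeas hGz, setLIntegral_const]
    have hsplit : ∫⁻ ω in Cset, Yf S NC κ ω * G ω ∂μ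
        = 2⁻¹ * z * μ (Cset ∩ A) + z * μ (Cset \ A) := by
      have h1 : ∫⁻ ω in Cset, Yf S NC κ ω * G ω ∂μ
          = ∫⁻ ω in Cset, (if ω ∈ A then 2⁻¹ else 1) * z ∂μ := by
        apply setLIntegral_congr_fun hCmeas
        intro ω hω
        beta_reduce
        rw [hYz ω hω, hGz ω hω]
      rw [h1]
      rw [← lintegral_add_compl (fun ω => (if ω ∈ A then 2⁻¹ else 1) * z) hAmeas
        (μ := μ.restrict Cset)]
      have h2 : ∫⁻ ω in A, (if ω ∈ A then 2⁻¹ else 1) * z ∂(μ.restrict Cset)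
          = 2⁻¹ * z * μ (Cset ∩ A) := by
        rw [setLIntegral_congr_fun hAmeas
          (fun ω hω => by rw [if_pos hω])]
        rw [setLIntegral_const, Measure.restrict_apply hAmeas, Set.inter_comm]
      have h3 : ∫⁻ ω in Aᶜ, (if ω ∈ A then 2⁻¹ else 1) * z ∂(μ.restrict Cset)
          = z * μ (Cset \ A) := by
        rw [setLIntegral_congr_fun hAmeas.compl
          (fun ω hω => by rw [if_neg hω, one_mul])]
        rw [setLIntegral_const, Measure.restrict_apply hAmeas.compl]
        rw [Set.inter_comm, Set.diff_eq]
      rw [h2, h3]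
    -- the difference part
    have hdiff : μ (Cset \ A) ≤ ENNReal.ofReal (1 - p) * μ Cset := by
      have hsum : μ (Cset ∩ A) + μ (Cset \ A) = μ Cset := measure_inter_add_diff Cset hAmeas
      have hfin : ENNReal.ofReal p * μ Cset ≠ ⊤ :=
        ENNReal.mul_ne_top ENNReal.ofReal_ne_top (measure_ne_top μ _)
      rw [← ENNReal.add_le_add_iff_right hfin]
      have heq : μ (Cset \ A) + ENNReal.ofReal p * μ Cset
          = ENNReal.ofReal (1 - p) * μ Cset + ENNReal.ofReal p * μ Cset := by
        calc μ (Cset \ A) + ENNReal.ofReal p * μ Cset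
            = μ (Cset \ A) + μ (Cset ∩ A) := by rw [hmain]
          _ = μ Cset := by rw [add_comm, hsum]
          _ = (ENNReal.ofReal (1 - p) + ENNReal.ofReal p) * μ Cset := by
              rw [← ENNReal.ofReal_add (by linarith) hp0]
              have hone : (1:ℝ) - p + p = 1 := by ring
              rw [hone, ENNReal.ofReal_one, one_mul]
          _ = ENNReal.ofReal (1 - p) * μ Cset + ENNReal.ofReal p * μ Cset := by
              rw [add_mul]
      exact le_of_eq heq
    -- put it together
    rw [hsplit, hIG, hmain]
    have h2inv : (2⁻¹ : ℝ≥0∞) = ENNReal.ofReal 2⁻¹ := by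
      rw [ENNReal.ofReal_inv_of_pos (by norm_num), ENNReal.ofReal_ofNat]
    calc 2⁻¹ * z * (ENNReal.ofReal p * μ Cset) + z * μ (Cset \ A)
        ≤ 2⁻¹ * z * (ENNReal.ofReal p * μ Cset) + z * (ENNReal.ofReal (1 - p) * μ Cset) := by
          gcongr
      _ = (ENNReal.ofReal 2⁻¹ * ENNReal.ofReal p + ENNReal.ofReal (1 - p)) * (z * μ Cset) := by
          rw [h2inv]; ring
      _ = ENNReal.ofReal (2⁻¹ * p + (1 - p)) * (z * μ Cset) := by
          rw [← ENNReal.ofReal_mul (by norm_num : (0:ℝ) ≤ 2⁻¹),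
            ← ENNReal.ofReal_add (by positivity) (by linarith)]
      _ ≤ q * (z * μ Cset) := by
          apply mul_le_mul_left
          apply ENNReal.ofReal_le_ofReal
          have hκR : (1:ℝ) ≤ (κ:ℝ) := by exact_mod_cast hκ1
          have : c / (2 * κ) ≤ p / 2 := by
            rw [div_le_div_iff₀ (by positivity) (by norm_num)]
            calc c * 2 = (c / κ) * κ * 2 := by field_simp
              _ ≤ p * κ * 2 := by
                  have := hpc
                  nlinarith [hp0]
              _ = p * (2 * κ) := by ring
          linarith
      _ = q * (z * μ Cset) := rfl
  -- assemble
  calc ∫⁻ ω, Yf S NC κ ω * G ω ∂μ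
      = ∫⁻ ω in U, Yf S NC κ ω * G ω ∂μ + ∫⁻ ω in Uᶜ, Yf S NC κ ω * G ω ∂μ :=
        (lintegral_add_compl _ hUmeas).symm
    _ = ∫⁻ ω in U, Yf S NC κ ω * G ω ∂μ := by
        rw [setLIntegral_measure_zero _ _ hUc, add_zero]
    _ = ∑' i : ι, ∫⁻ ω in Cyl i, Yf S NC κ ω * G ω ∂μ := lintegral_iUnion hCylMeas hdisj _
    _ ≤ ∑' i : ι, q * ∫⁻ ω in Cyl i, G ω ∂μ := ENNReal.tsum_le_tsum hper
    _ = q * ∑' i : ι, ∫⁻ ω in Cyl i, G ω ∂μ := ENNReal.tsum_mul_left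
    _ = q * ∫⁻ ω in U, G ω ∂μ := by rw [← lintegral_iUnion hCylMeas hdisj]
    _ ≤ q * ∫⁻ ω, G ω ∂μ := mul_le_mul_right (setLIntegral_le_lintegral _ _) _

end LV12

namespace LV12
variable {Ω : Type} [MeasurableSpace Ω] {S : ℕ → Ω → ℕ × ℕ} {NC : ℕ × ℕ → ℕ × ℕ → Prop}

open Classical in
noncomputable def Zf (S : ℕ → Ω → ℕ × ℕ) (NC : ℕ × ℕ → ℕ × ℕ → Prop) (k m : ℕ) (ω : Ω) : ℝ≥0∞ :=
  ∏ j ∈ Finset.Ioc k m, Yf S NC j ω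

lemma measurableSet_prodset (A : Set (ℕ × ℕ)) : MeasurableSet A :=
  (Set.to_countable A).measurableSet

lemma meas_minsLt (hS : ∀ t, Measurable (S t)) (t k : ℕ) :
    MeasurableSet {ω : Ω | k < mins S t ω} :=
  (hS t) (measurableSet_prodset {p | k < min p.1 p.2})

lemma meas_minsPos (hS : ∀ t, Measurable (S t)) (t : ℕ) :
    MeasurableSet {ω : Ω | 0 < min (S t ω).1 (S t ω).2} :=
  (hS t) (measurableSet_prodset {p | 0 < min p.1 p.2})

lemma meas_fh (hS : ∀ t, Measurable (S t)) (k t : ℕ) :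
    MeasurableSet {ω : Ω | FirstHit S k t ω} := by
  have : {ω : Ω | FirstHit S k t ω} =
      ((S t) ⁻¹' {p | min p.1 p.2 = k}) ∩ ⋂ s, ⋂ (_ : s < t), {ω | k < mins S s ω} := by
    ext ω
    simp [FirstHit, mins, Set.mem_iInter]
  rw [this]
  exact ((hS t) (measurableSet_prodset _)).inter
    (MeasurableSet.iInter fun s => MeasurableSet.iInter fun _ => meas_minsLt hS s k)

lemma meas_nc (hS : ∀ t, Measurable (S t)) (NC : ℕ × ℕ → ℕ × ℕ → Prop) (t : ℕ) :
    MeasurableSet {ω : Ω | NC (S t ω) (S (t + 1) ω)} := by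
  have h : Measurable fun ω : Ω => (S t ω, S (t + 1) ω) := (hS t).prodMk (hS (t + 1))
  exact h ((Set.to_countable {p : (ℕ × ℕ) × (ℕ × ℕ) | NC p.1 p.2}).measurableSet)

lemma meas_succev (hS : ∀ t, Measurable (S t)) (k : ℕ) :
    MeasurableSet {ω : Ω | succev S NC k ω} := by
  have : {ω : Ω | succev S NC k ω} =
      ⋃ t, ({ω | FirstHit S k t ω} ∩ {ω | NC (S t ω) (S (t + 1) ω)}) := by
    ext ω; simp [succev]
  rw [this]
  exact MeasurableSet.iUnion fun t => (meas_fh hS k t).inter (meas_nc hS NC t)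

lemma meas_Yf (hS : ∀ t, Measurable (S t)) (k : ℕ) : Measurable (Yf S NC k) := by
  unfold Yf
  exact Measurable.ite (meas_succev hS k) measurable_const measurable_const

lemma meas_Zf (hS : ∀ t, Measurable (S t)) (k m : ℕ) : Measurable (Zf S NC k m) :=
  Finset.measurable_prod _ fun j _ => meas_Yf hS j

lemma Yf_le_one (k : ℕ) (ω : Ω) : Yf S NC k ω ≤ 1 := by
  unfold Yf; split
  · exact ENNReal.inv_le_one.mpr (by norm_num)
  · exact le_rfl

lemma Zf_le_one (k m : ℕ) (ω : Ω) : Zf S NC k m ω ≤ 1 :=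
  Finset.prod_le_one (fun _ _ => by positivity) (fun j _ => Yf_le_one j ω)

lemma succev_transfer {κ j t : ℕ} {ω ω' : Ω} (hfh : FirstHit S κ t ω)
    (heq : ∀ s ≤ t, S s ω' = S s ω) (hj : κ < j) :
    succev S NC j ω → succev S NC j ω' := by
  rintro ⟨s, ⟨hs1, hs2⟩, hnc⟩
  have hst : s < t := by
    rcases Nat.lt_trichotomy s t with h | h | h
    · exact h
    · exfalso; rw [h] at hs1; have := hfh.1; omega
    · exfalso; have := hs2 t h; have := hfh.1; omega
  have hmins : ∀ u ≤ t, mins S u ω' = mins S u ω := by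
    intro u hu; unfold mins; rw [heq u hu]
  refine ⟨s, ⟨?_, fun u hu => ?_⟩, ?_⟩
  · rw [hmins s (by omega)]; exact hs1
  · rw [hmins u (by omega)]; exact hs2 u hu
  · rw [heq s (by omega), heq (s + 1) (by omega)]; exact hnc

lemma succev_iff_of_prefix {κ j t : ℕ} {ω ω' : Ω} (hfh : FirstHit S κ t ω)
    (heq : ∀ s ≤ t, S s ω' = S s ω) (hj : κ < j) :
    succev S NC j ω' ↔ succev S NC j ω := by
  have hfh' : FirstHit S κ t ω' := by
    refine ⟨?_, fun s hs => ?_⟩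
    · unfold mins; rw [heq t le_rfl]; exact hfh.1
    · unfold mins; rw [heq s (by omega)]; exact hfh.2 s hs
  exact ⟨succev_transfer (NC := NC) hfh' (fun s hs => (heq s hs).symm) hj,
    succev_transfer hfh heq hj⟩

lemma Zf_const (κ m t : ℕ) (ω ω' : Ω) (hfh : FirstHit S κ t ω)
    (heq : ∀ s ≤ t, S s ω' = S s ω) : Zf S NC κ m ω' = Zf S NC κ m ω := by
  classical
  unfold Zf
  apply Finset.prod_congr rfl
  intro j hj
  have hj' : κ < j := (Finset.mem_Ioc.mp hj).1
  unfold Yf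
  exact if_congr (succev_iff_of_prefix hfh heq hj') rfl rfl

lemma zf_bound (ϑ α : ℝ) (hϑ : 0 < ϑ) (hα : 0 < α)
    (μ : Measure Ω) [IsProbabilityMeasure μ]
    (hS : ∀ t, Measurable (S t)) {m : ℕ}
    (hm0 : ∀ ω, mins S 0 ω = m)
    (hdec : ∀ t ω, mins S t ω ≤ mins S (t + 1) ω + 1)
    (hcons : μ {ω | ∃ t, mins S t ω = 0} = 1)
    (hcond : ∀ (t : ℕ) (path : ℕ → ℕ × ℕ),
          0 < min (path t).1 (path t).2 →
          μ {ω | ∀ s ≤ t, S s ω = path s} ≠ 0 →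
          μ[|{ω | ∀ s ≤ t, S s ω = path s}] {ω | NC (path t) (S (t + 1) ω)}
            = ENNReal.ofReal (ϑ * ((path t).1 + (path t).2) /
                  (α * (path t).1 * (path t).2 + ϑ * ((path t).1 + (path t).2)))) :
    ∀ d ≤ m, ∫⁻ ω, Zf S NC (m - d) m ω ∂μ
      ≤ ∏ j ∈ Finset.Ioc (m - d) m, ENNReal.ofReal (1 - ϑ / (α + ϑ) / (2 * j)) := by
  intro d
  induction d with
  | zero =>
    intro _
    simp [Zf, Finset.Ioc_self]
  | succ d ih =>
    intro hdm
    set k := m - (d + 1) with hkdef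
    have hk1 : k + 1 = m - d := by omega
    have hk1m : k + 1 ≤ m := by omega
    have hins : insert (k + 1) (Finset.Ioc (k + 1) m) = Finset.Ioc k m := by
      rw [Finset.Ioc_insert_left hk1m]
      exact Finset.Icc_add_one_left_eq_Ioc k m
    have hzsplit : ∀ ω, Zf S NC k m ω = Yf S NC (k + 1) ω * Zf S NC (k + 1) m ω := by
      intro ω
      unfold Zf
      rw [← hins, Finset.prod_insert (by simp)]
    have ih' := ih (by omega)
    rw [← hk1] at ih'
    calc ∫⁻ ω, Zf S NC k m ω ∂μ
        = ∫⁻ ω, Yf S NC (k + 1) ω * Zf S NC (k + 1) m ω ∂μ :=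
          lintegral_congr hzsplit
      _ ≤ ENNReal.ofReal (1 - ϑ / (α + ϑ) / (2 * ((k + 1 : ℕ) : ℝ))) *
            ∫⁻ ω, Zf S NC (k + 1) m ω ∂μ :=
          step ϑ α hϑ hα μ hS hm0 hdec hcons hcond (by omega) hk1m
            (Zf S NC (k + 1) m) (fun ω => Zf_le_one _ _ _)
            (fun t ω ω' hfh heq => Zf_const _ _ t ω ω' hfh heq)
      _ ≤ ENNReal.ofReal (1 - ϑ / (α + ϑ) / (2 * ((k + 1 : ℕ) : ℝ))) *
            ∏ j ∈ Finset.Ioc (k + 1) m, ENNReal.ofReal (1 - ϑ / (α + ϑ) / (2 * j)) :=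
          mul_le_mul_right ih' _
      _ = ∏ j ∈ Finset.Ioc k m, ENNReal.ofReal (1 - ϑ / (α + ϑ) / (2 * j)) := by
          rw [← hins, Finset.prod_insert (by simp)]

lemma log_le_harmonic : ∀ m : ℕ, Real.log (m + 1) ≤ ∑ j ∈ Finset.Icc 1 m, (1 / (j : ℝ))
  | 0 => by simp
  | (m + 1) => by
    have ih := log_le_harmonic m
    rw [Finset.sum_Icc_succ_top (by omega : 1 ≤ m + 1)]
    have h2 : Real.log (((m : ℝ) + 2) / ((m : ℝ) + 1)) ≤ ((m : ℝ) + 2) / ((m : ℝ) + 1) - 1 :=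
      Real.log_le_sub_one_of_pos (by positivity)
    rw [Real.log_div (by positivity) (by positivity)] at h2
    have h3 : ((m : ℝ) + 2) / ((m : ℝ) + 1) - 1 = 1 / ((m : ℝ) + 1) := by
      rw [div_sub_one (by positivity)]
      norm_num
    push_cast
    push_cast at ih
    have h4 : ((m : ℝ) + 1 + 1) = (m : ℝ) + 2 := by ring
    rw [h4]
    linarith

lemma harmonic_ge_log {m : ℕ} (hm : 1 ≤ m) :
    Real.log m ≤ ∑ j ∈ Finset.Ioc 0 m, (1 / (j : ℝ)) := by
  have h1 : Real.log m ≤ Real.log (m + 1) := by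
    apply Real.log_le_log (by exact_mod_cast hm)
    linarith [(by norm_num : (0:ℝ) ≤ 1)]
  have h2 := log_le_harmonic m
  rw [show Finset.Icc 1 m = Finset.Ioc 0 m from Finset.Icc_add_one_left_eq_Ioc 0 m] at h2
  linarith

lemma prod_ofReal_le (c : ℝ) (hc0 : 0 < c) (hc1 : c < 1) (m : ℕ) (hm : 1 ≤ m) :
    ∏ j ∈ Finset.Ioc 0 m, ENNReal.ofReal (1 - c / (2 * j))
      ≤ ENNReal.ofReal (Real.exp (-(c / 2) * Real.log m)) := by
  have hnn : ∀ j ∈ Finset.Ioc 0 m, 0 ≤ 1 - c / (2 * (j : ℝ)) := by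
    intro j hj
    have hj1 : 1 ≤ j := (Finset.mem_Ioc.mp hj).1
    have hjR : (1 : ℝ) ≤ (j : ℝ) := by exact_mod_cast hj1
    have h1 : c / (2 * (j : ℝ)) ≤ 1 := by
      rw [div_le_one (by linarith)]
      linarith
    linarith
  rw [← ENNReal.ofReal_prod_of_nonneg hnn]
  apply ENNReal.ofReal_le_ofReal
  calc ∏ j ∈ Finset.Ioc 0 m, (1 - c / (2 * (j : ℝ)))
      ≤ ∏ j ∈ Finset.Ioc 0 m, Real.exp (-(c / (2 * (j : ℝ)))) := by
        apply Finset.prod_le_prod hnn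
        intro j hj
        have := Real.add_one_le_exp (-(c / (2 * (j : ℝ))))
        linarith
    _ = Real.exp (∑ j ∈ Finset.Ioc 0 m, -(c / (2 * (j : ℝ)))) := (Real.exp_sum _ _).symm
    _ = Real.exp (-(c / 2) * ∑ j ∈ Finset.Ioc 0 m, (1 / (j : ℝ))) := by
        rw [Finset.mul_sum]
        congr 1
        refine Finset.sum_congr rfl (fun j hj => ?_)
        ring
    _ ≤ Real.exp (-(c / 2) * Real.log m) := by
        apply Real.exp_le_exp.mpr
        exact mul_le_mul_of_nonpos_left (harmonic_ge_log hm) (by linarith)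

open Classical in
lemma key_pointwise (m : ℕ) (ω : Ω) :
    ∃ n : ℕ, Zf S NC 0 m ω = 2⁻¹ ^ n ∧ ((n : ℝ≥0∞)) ≤ indivCount NC S ω := by
  refine ⟨((Finset.Ioc 0 m).filter (fun k => succev S NC k ω)).card, ?_, ?_⟩
  · unfold Zf Yf
    rw [Finset.prod_ite (fun _ => (2⁻¹ : ℝ≥0∞)) (fun _ => (1 : ℝ≥0∞))]
    simp
  · set F := (Finset.Ioc 0 m).filter (fun k => succev S NC k ω) with hF
    set f : ℕ → ℝ≥0∞ := fun t =>
      if (∀ s ≤ t, 0 < min (S s ω).1 (S s ω).2) ∧ NC (S t ω) (S (t + 1) ω) then 1 else 0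
      with hfdef
    have hind : indivCount NC S ω = ∑' t, f t := rfl
    set ψ : ℕ → ℕ := fun k => if h : succev S NC k ω then Classical.choose h else 0 with hψ
    have hspec : ∀ k ∈ F, FirstHit S k (ψ k) ω ∧ NC (S (ψ k) ω) (S (ψ k + 1) ω) := by
      intro k hk
      have hk' : succev S NC k ω := (Finset.mem_filter.mp hk).2
      simp only [hψ, dif_pos hk']
      exact Classical.choose_spec hk'
    have hinj : Set.InjOn ψ F := by
      intro k hk k' hk' hkk
      have h1 := (hspec k hk).1.1
      have h2 := (hspec k' hk').1.1
      rw [hkk] at h1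
      omega
    have hfone : ∀ k ∈ F, f (ψ k) = 1 := by
      intro k hk
      have hk1 : 1 ≤ k := by
        have := (Finset.mem_filter.mp hk).1
        rw [Finset.mem_Ioc] at this
        omega
      obtain ⟨⟨hfh1, hfh2⟩, hnc⟩ := hspec k hk
      have hcondA : ∀ s ≤ ψ k, 0 < min (S s ω).1 (S s ω).2 := by
        intro s hs
        rcases Nat.lt_or_ge s (ψ k) with h | h
        · have := hfh2 s h; unfold mins at this; omega
        · have hse : s = ψ k := by omega
          rw [hse]
          unfold mins at hfh1
          omega
      simp only [hfdef]
      rw [if_pos ⟨hcondA, hnc⟩]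
    calc ((F.card : ℕ) : ℝ≥0∞) = ∑ _k ∈ F, 1 := by simp
      _ = ∑ k ∈ F, f (ψ k) := Finset.sum_congr rfl (fun k hk => (hfone k hk).symm)
      _ = ∑ t ∈ F.image ψ, f t := (Finset.sum_image (fun x hx y hy h => hinj hx hy h)).symm
      _ ≤ ∑' t, f t := ENNReal.sum_le_tsum _
      _ = indivCount NC S ω := hind.symm

open Classical in
lemma meas_indivCount (hS : ∀ t, Measurable (S t)) :
    Measurable (indivCount NC S) := by
  unfold indivCount
  apply Measurable.ennreal_tsum
  intro t
  apply Measurable.ite _ measurable_const measurable_const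
  have h1 : MeasurableSet {ω : Ω | ∀ s ≤ t, 0 < min (S s ω).1 (S s ω).2} := by
    have : {ω : Ω | ∀ s ≤ t, 0 < min (S s ω).1 (S s ω).2}
        = ⋂ s, ⋂ (_ : s ≤ t), {ω | 0 < min (S s ω).1 (S s ω).2} := by
      ext ω; simp [Set.mem_iInter]
    rw [this]
    exact MeasurableSet.iInter fun s => MeasurableSet.iInter fun _ => meas_minsPos hS s
  have : {ω : Ω | (∀ s ≤ t, 0 < min (S s ω).1 (S s ω).2) ∧ NC (S t ω) (S (t + 1) ω)}
      = {ω : Ω | ∀ s ≤ t, 0 < min (S s ω).1 (S s ω).2} ∩ {ω | NC (S t ω) (S (t + 1) ω)} :=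
    rfl
  rw [this]
  exact h1.inter (meas_nc hS NC t)

end LV12


/-- In a two-species Lotka–Volterra jump chain with individual-event rate
`ϑ = β + δ > 0`, interspecific competition rate `α > 0` and no intraspecific
competition, started with minority count `m`, there exist constants `f, g > 0`
(depending only on `α` and `ϑ`) such that the number `I(S)` of individual
(non-competitive) events before consensus satisfies
`Pr[I(S) ≥ f·log m] ≥ 1 − 1/m^g`. -/
theorem stmt_12 (ϑ α : ℝ) (hϑ : 0 < ϑ) (hα : 0 < α) :
    ∃ f g : ℝ, 0 < f ∧ 0 < g ∧
      ∀ (Ω : Type) (_ : MeasurableSpace Ω) (μ : Measure Ω), IsProbabilityMeasure μ →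
      ∀ (S : ℕ → Ω → ℕ × ℕ) (NonComp : ℕ × ℕ → ℕ × ℕ → Prop) (a₀ m : ℕ),
        2 ≤ m → m ≤ a₀ →
        (∀ t, Measurable (S t)) →
        (∀ ω, S 0 ω = (a₀, m)) →
        -- the minority count decreases by at most one in each step
        (∀ t ω, min (S t ω).1 (S t ω).2 ≤ min (S (t + 1) ω).1 (S (t + 1) ω).2 + 1) →
        -- consensus is reached with probability 1
        (μ {ω | ∃ t, min (S t ω).1 (S t ω).2 = 0} = 1) →
        -- in any interior state `(a,b)`, conditionally on any past trajectory, a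
        -- non-competitive (individual) event occurs with probability
        -- `ϑ(a+b)/(αab + ϑ(a+b))`
        (∀ (t : ℕ) (path : ℕ → ℕ × ℕ),
          0 < min (path t).1 (path t).2 →
          μ {ω | ∀ s ≤ t, S s ω = path s} ≠ 0 →
          μ[|{ω | ∀ s ≤ t, S s ω = path s}] {ω | NonComp (path t) (S (t + 1) ω)}
            = ENNReal.ofReal
                (ϑ * ((path t).1 + (path t).2) /
                  (α * (path t).1 * (path t).2 + ϑ * ((path t).1 + (path t).2)))) →
        1 - ENNReal.ofReal (1 / (m : ℝ) ^ g) ≤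
          μ {ω | ENNReal.ofReal (f * Real.log m) ≤ indivCount NonComp S ω} := by
  have hαϑ : (0:ℝ) < α + ϑ := by linarith
  set c : ℝ := ϑ / (α + ϑ) with hc
  have hc0 : 0 < c := div_pos hϑ hαϑ
  have hc1 : c < 1 := by rw [hc, div_lt_one hαϑ]; linarith
  have hlog2 : (0:ℝ) < Real.log 2 := Real.log_pos (by norm_num)
  refine ⟨c / (8 * Real.log 2), 3 * c / 8,
    div_pos hc0 (by linarith), by linarith, ?_⟩
  intro Ω mΩ μ hμ S NC a₀ m hm2 hma hS hS0 hdec hcons hcond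
  set f : ℝ := c / (8 * Real.log 2) with hf
  set g : ℝ := 3 * c / 8 with hg
  have hf0 : 0 < f := div_pos hc0 (by linarith)
  have hm0 : ∀ ω, LV12.mins S 0 ω = m := by
    intro ω
    unfold LV12.mins
    rw [hS0 ω]
    exact min_eq_right hma
  have hdec' : ∀ t ω, LV12.mins S t ω ≤ LV12.mins S (t + 1) ω + 1 := hdec
  have hcons' : μ {ω | ∃ t, LV12.mins S t ω = 0} = 1 := hcons
  set L : ℝ := Real.log m with hL
  have hmR : (1:ℝ) < (m:ℝ) := by exact_mod_cast Nat.lt_of_lt_of_le Nat.one_lt_two hm2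
  have hL0 : 0 < L := Real.log_pos hmR
  -- integral bound via the conditioning induction
  have hint : ∫⁻ ω, LV12.Zf S NC 0 m ω ∂μ ≤ ENNReal.ofReal (Real.exp (-(c / 2) * L)) := by
    have h1 := LV12.zf_bound ϑ α hϑ hα μ hS hm0 hdec' hcons' hcond m le_rfl
    rw [Nat.sub_self] at h1
    exact h1.trans (LV12.prod_ofReal_le c hc0 hc1 m (by omega))
  set ε : ℝ≥0∞ := ENNReal.ofReal ((2:ℝ) ^ (-(f * L))) with hε
  have hε0 : ε ≠ 0 := by
    rw [hε]
    exact ne_of_gt (ENNReal.ofReal_pos.mpr (Real.rpow_pos_of_pos (by norm_num) _))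
  have hεt : ε ≠ ⊤ := ENNReal.ofReal_ne_top
  -- the bad event is contained in a large-value event for Zf
  have hsub : {ω | ENNReal.ofReal (f * L) ≤ indivCount NC S ω}ᶜ
      ⊆ {ω | ε ≤ LV12.Zf S NC 0 m ω} := by
    intro ω hω
    simp only [Set.mem_compl_iff, Set.mem_setOf_eq, not_le] at hω
    obtain ⟨n, hn1, hn2⟩ := LV12.key_pointwise (S := S) (NC := NC) m ω
    have h1 : ((n : ℕ) : ℝ≥0∞) < ENNReal.ofReal (f * L) := lt_of_le_of_lt hn2 hω
    have h2 : ((n : ℕ) : ℝ) < f * L := by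
      rw [← ENNReal.ofReal_natCast] at h1
      exact (ENNReal.ofReal_lt_ofReal_iff (by positivity)).mp h1
    show ε ≤ LV12.Zf S NC 0 m ω
    rw [hn1, hε]
    have h3 : (2⁻¹ : ℝ≥0∞) ^ n = ENNReal.ofReal ((2:ℝ) ^ (-(n : ℝ))) := by
      rw [Real.rpow_neg (by norm_num : (0:ℝ) ≤ 2), Real.rpow_natCast]
      rw [ENNReal.ofReal_inv_of_pos (by positivity), ENNReal.ofReal_pow (by norm_num : (0:ℝ) ≤ 2)]
      rw [ENNReal.ofReal_ofNat, ← ENNReal.inv_pow]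
    rw [h3]
    apply ENNReal.ofReal_le_ofReal
    apply Real.rpow_le_rpow_of_exponent_le (by norm_num : (1:ℝ) ≤ 2)
    linarith
  -- Markov inequality
  have hZmeas : Measurable (LV12.Zf S NC 0 m) := LV12.meas_Zf hS 0 m
  have hmark : μ {ω | ε ≤ LV12.Zf S NC 0 m ω} ≤ (∫⁻ ω, LV12.Zf S NC 0 m ω ∂μ) / ε :=
    meas_ge_le_lintegral_div hZmeas.aemeasurable hε0 hεt
  -- the final numeric bound
  have hfinal : (∫⁻ ω, LV12.Zf S NC 0 m ω ∂μ) / ε ≤ ENNReal.ofReal (1 / (m:ℝ) ^ g) := by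
    refine (ENNReal.div_le_div_right hint ε).trans ?_
    rw [hε, ← ENNReal.ofReal_div_of_pos (Real.rpow_pos_of_pos (by norm_num) _)]
    apply ENNReal.ofReal_le_ofReal
    have hmpos : (0:ℝ) < (m:ℝ) := by linarith
    have e1 : (2:ℝ) ^ (-(f * L)) = Real.exp (Real.log 2 * (-(f * L))) :=
      Real.rpow_def_of_pos (by norm_num) _
    have e2 : (m:ℝ) ^ g = Real.exp (Real.log (m:ℝ) * g) := Real.rpow_def_of_pos hmpos g
    have hf8 : f * Real.log 2 = c / 8 := by
      rw [hf]
      field_simp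
    rw [e1, e2, ← Real.exp_sub, one_div, ← Real.exp_neg]
    apply le_of_eq
    apply congrArg
    rw [hg, ← hL]
    linear_combination L * hf8
  -- conclude
  have hTmeas : MeasurableSet {ω | ENNReal.ofReal (f * L) ≤ indivCount NC S ω} :=
    measurableSet_le measurable_const (LV12.meas_indivCount hS)
  have hcompl : μ {ω | ENNReal.ofReal (f * L) ≤ indivCount NC S ω}ᶜ
      ≤ ENNReal.ofReal (1 / (m:ℝ) ^ g) :=
    le_trans (measure_mono hsub) (le_trans hmark hfinal)
  have heq : μ {ω | ENNReal.ofReal (f * L) ≤ indivCount NC S ω}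
      = 1 - μ {ω | ENNReal.ofReal (f * L) ≤ indivCount NC S ω}ᶜ := by
    have h := prob_compl_eq_one_sub (μ := μ) hTmeas.compl
    rwa [compl_compl] at h
  rw [heq]
  exact tsub_le_tsub_left hcompl 1
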